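/- arXiv:2303.11620 — 2 statements merged into one kernel-verified Lean document; each statement's English description precedes it below -/
import Mathlib

section
/- Let S_0, S ∈ R^{md×d} satisfy S_0^T S_0 = S^T S = m·I_d, and let U_0 ∈ R^{md×(m-1)d} have orthonormal columns spanning the orthogonal complement of the column space of S_0 (so U_0^T U_0 = I and S_0^T U_0 = 0). Then ||U_0^T S||_F^2 ≥ (1/2) · min over orthogonal Q ∈ O(d) of ||S - S_0 Q||_F^2. -/
open Matrix

/-- Squared Frobenius norm of a rectangular real matrix. -/
def frobSq {p q : ℕ} (A : Matrix (Fin p) (Fin q) ℝ) : ℝ :=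
  (Aᵀ * A).trace

section helpers

lemma frobSq_eq_sum {p q : ℕ} (A : Matrix (Fin p) (Fin q) ℝ) :
    frobSq A = ∑ i, ∑ t, (A t i)^2 := by
  simp [frobSq, Matrix.trace, Matrix.diag, Matrix.mul_apply, sq]

lemma frobSq_nonneg {p q : ℕ} (A : Matrix (Fin p) (Fin q) ℝ) : 0 ≤ frobSq A := by
  rw [frobSq_eq_sum]
  exact Finset.sum_nonneg fun i _ => Finset.sum_nonneg fun t _ => sq_nonneg _

lemma trace_vecMulVec_mul {d : ℕ} (u v : Fin d → ℝ) (A : Matrix (Fin d) (Fin d) ℝ) :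
    (vecMulVec u v * A).trace = v ⬝ᵥ (A *ᵥ u) := by
  simp [Matrix.trace, Matrix.diag, Matrix.mul_apply, vecMulVec_apply, dotProduct, mulVec,
    Finset.mul_sum, Finset.sum_mul]
  rw [Finset.sum_comm]
  congr 1; ext i; congr 1; ext j; ring

lemma vecMulVec_mul_vecMulVec {d : ℕ} (u v w x : Fin d → ℝ) :
    vecMulVec u v * vecMulVec w x = (v ⬝ᵥ w) • vecMulVec u x := by
  ext i j
  simp [Matrix.mul_apply, vecMulVec_apply, dotProduct, Finset.mul_sum, Finset.sum_mul]
  congr 1; ext k; ring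

lemma vecMulVec_transpose' {d : ℕ} (u v : Fin d → ℝ) :
    (vecMulVec u v)ᵀ = vecMulVec v u := by
  ext i j; simp [vecMulVec_apply, mul_comm]

lemma single_dot_mulVec_single {d : ℕ} (A : Matrix (Fin d) (Fin d) ℝ) (a b : Fin d) :
    Pi.single a 1 ⬝ᵥ (A *ᵥ Pi.single b 1) = A a b := by
  simp [mulVec_single, Pi.single_apply, dotProduct]

lemma single_dot_single {d : ℕ} (a b : Fin d) :
    (Pi.single a 1 : Fin d → ℝ) ⬝ᵥ (Pi.single b 1 : Fin d → ℝ) = if a = b then 1 else 0 := by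
  simp [dotProduct, Pi.single_apply, ite_and, eq_comm]

lemma dotProduct_self_pos' {d : ℕ} {v : Fin d → ℝ} (hv : v ≠ 0) : 0 < v ⬝ᵥ v := by
  have h0 : 0 ≤ v ⬝ᵥ v := Finset.sum_nonneg fun i _ => mul_self_nonneg _
  rcases h0.lt_or_eq with h | h
  · exact h
  · exact absurd ((dotProduct_self_eq_zero).mp h.symm) hv

/-- `(B *ᵥ v) ⬝ᵥ (B *ᵥ v) = v ⬝ᵥ ((Bᵀ * B) *ᵥ v)`. -/
lemma dot_BtB {p q : ℕ} (B : Matrix (Fin p) (Fin q) ℝ) (v : Fin q → ℝ) :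
    v ⬝ᵥ ((Bᵀ * B) *ᵥ v) = (B *ᵥ v) ⬝ᵥ (B *ᵥ v) := by
  rw [← mulVec_mulVec, dotProduct_mulVec, vecMul_transpose]

end helpers

section householder

noncomputable def hh {d : ℕ} (v : Fin d → ℝ) : Matrix (Fin d) (Fin d) ℝ :=
  1 - (2 / (v ⬝ᵥ v)) • vecMulVec v v

lemma hh_transpose {d : ℕ} (v : Fin d → ℝ) : (hh v)ᵀ = hh v := by
  simp [hh, transpose_sub, transpose_smul, vecMulVec_transpose']

lemma hh_orth {d : ℕ} (v : Fin d → ℝ) (hv : v ≠ 0) : (hh v)ᵀ * hh v = 1 := by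
  have hvv : v ⬝ᵥ v ≠ 0 := fun h => hv (by rwa [dotProduct_self_eq_zero] at h)
  rw [hh_transpose]
  unfold hh
  simp only [sub_mul, mul_sub, one_mul, mul_one, Matrix.mul_smul, Matrix.smul_mul,
    vecMulVec_mul_vecMulVec, smul_smul]
  have : 2 / (v ⬝ᵥ v) * (2 / (v ⬝ᵥ v) * (v ⬝ᵥ v)) = 2 / (v ⬝ᵥ v) + 2 / (v ⬝ᵥ v) := by
    field_simp; ring
  rw [this]
  module

end householder

section maximizer

lemma exists_max_orth (d : ℕ) (R : Matrix (Fin d) (Fin d) ℝ) :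
    ∃ Q : Matrix (Fin d) (Fin d) ℝ, Qᵀ * Q = 1 ∧
      ∀ W : Matrix (Fin d) (Fin d) ℝ, Wᵀ * W = 1 →
        (Wᵀ * R).trace ≤ (Qᵀ * R).trace := by
  classical
  set K : Set (Matrix (Fin d) (Fin d) ℝ) := {Q | Qᵀ * Q = 1} with hK
  have hKne : K.Nonempty := ⟨1, by simp [hK]⟩
  have hbound : ∀ Q ∈ K, ∀ i j, Q i j ∈ Set.Icc (-1 : ℝ) 1 := by
    intro Q hQ i j
    have h1 : (Qᵀ * Q) j j = 1 := by rw [hQ]; simp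
    have h2 : ∑ t, (Q t j)^2 = 1 := by
      rw [← h1]; simp [Matrix.mul_apply, sq]
    have h3 : (Q i j)^2 ≤ 1 := by
      rw [← h2]
      exact Finset.single_le_sum (fun t _ => sq_nonneg (Q t j)) (Finset.mem_univ i)
    constructor <;> nlinarith [sq_nonneg (Q i j + 1), sq_nonneg (Q i j - 1)]
  have hC : IsCompact ((Set.univ : Set (Fin d)).pi
      fun _ => (Set.univ : Set (Fin d)).pi fun _ => Set.Icc (-1 : ℝ) 1) :=
    isCompact_univ_pi fun _ => isCompact_univ_pi fun _ => isCompact_Icc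
  have hKsub : K ⊆ (Set.univ : Set (Fin d)).pi
      fun _ => (Set.univ : Set (Fin d)).pi fun _ => Set.Icc (-1 : ℝ) 1 := by
    intro Q hQ i _ j _
    exact hbound Q hQ i j
  have hKclosed : IsClosed K := by
    have hcont : Continuous fun Q : Matrix (Fin d) (Fin d) ℝ => Qᵀ * Q :=
      (continuous_id.matrix_transpose).matrix_mul continuous_id
    exact isClosed_singleton.preimage hcont
  have hKcompact : IsCompact K := hC.of_isClosed_subset hKclosed hKsub
  have hfc : ContinuousOn (fun Q : Matrix (Fin d) (Fin d) ℝ => (Qᵀ * R).trace) K :=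
    (((continuous_id.matrix_transpose).matrix_mul continuous_const).matrix_trace).continuousOn
  obtain ⟨Q, hQK, hQmax⟩ := hKcompact.exists_isMaxOn hKne hfc
  exact ⟨Q, hQK, fun W hW => hQmax hW⟩

lemma quad_nonneg_of_max {d : ℕ} (A : Matrix (Fin d) (Fin d) ℝ)
    (hmax : ∀ W : Matrix (Fin d) (Fin d) ℝ, Wᵀ * W = 1 → (Wᵀ * A).trace ≤ A.trace)
    (v : Fin d → ℝ) : 0 ≤ v ⬝ᵥ (A *ᵥ v) := by
  rcases eq_or_ne v 0 with rfl | hv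
  · simp
  · have h := hmax (hh v) (hh_orth v hv)
    rw [hh_transpose] at h
    have hexp : (hh v * A).trace = A.trace - (2 / (v ⬝ᵥ v)) * (v ⬝ᵥ (A *ᵥ v)) := by
      rw [hh, Matrix.sub_mul, Matrix.one_mul, Matrix.smul_mul, trace_sub, trace_smul,
        trace_vecMulVec_mul]
      simp
    rw [hexp] at h
    have hvv := dotProduct_self_pos' hv
    have hc : 0 < 2 / (v ⬝ᵥ v) := div_pos two_pos hvv
    nlinarith

set_option maxHeartbeats 1000000 in
lemma sym_of_max {d : ℕ} (A : Matrix (Fin d) (Fin d) ℝ)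
    (hmax : ∀ W : Matrix (Fin d) (Fin d) ℝ, Wᵀ * W = 1 → (Wᵀ * A).trace ≤ A.trace) :
    Aᵀ = A := by
  ext i j
  rw [transpose_apply]
  rcases eq_or_ne i j with rfl | hij
  · rfl
  set α := A i i + A j j with hα
  set β := A j i - A i j with hβ
  have hαnn : 0 ≤ α := by
    have h1 := quad_nonneg_of_max A hmax (Pi.single i 1)
    have h2 := quad_nonneg_of_max A hmax (Pi.single j 1)
    rw [single_dot_mulVec_single] at h1 h2
    rw [hα]; linarith
  have key : ∀ c s : ℝ, c^2 + s^2 = 1 → 0 ≤ s^2 * α + c * s * β := by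
    intro c s hcs
    set u : Fin d → ℝ := Pi.single i 1 with hu
    set w : Fin d → ℝ := c • (Pi.single i 1 : Fin d → ℝ) + s • (Pi.single j 1 : Fin d → ℝ)
      with hw
    have hune : u ≠ 0 := by
      intro h
      have := congrFun h i
      simp [hu] at this
    have hwne : w ≠ 0 := by
      intro h
      have hwi := congrFun h i
      have hwj := congrFun h j
      simp [hw, Pi.single_apply, hij, Ne.symm hij] at hwi hwj
      rw [hwi, hwj] at hcs
      norm_num at hcs
    have huu : u ⬝ᵥ u = 1 := by rw [hu, single_dot_single]; simp
    have hAw : A *ᵥ w = c • (A *ᵥ Pi.single i 1) + s • (A *ᵥ Pi.single j 1) := by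
      rw [hw, mulVec_add, mulVec_smul, mulVec_smul]
    have hww : w ⬝ᵥ w = 1 := by
      rw [hw]
      simp only [add_dotProduct, smul_dotProduct, dotProduct_add, dotProduct_smul,
        single_dot_single, smul_eq_mul]
      simp [hij, Ne.symm hij]
      linarith [hcs]
    have hwu : w ⬝ᵥ u = c := by
      rw [hw, hu]
      simp only [add_dotProduct, smul_dotProduct, single_dot_single, smul_eq_mul]
      simp [Ne.symm hij]
    have hwAw : w ⬝ᵥ (A *ᵥ w) = c^2 * A i i + c*s*A i j + c*s*A j i + s^2 * A j j := by
      rw [hw, hAw]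
      simp only [add_dotProduct, smul_dotProduct, dotProduct_add, dotProduct_smul,
        single_dot_mulVec_single, smul_eq_mul]
      ring
    have huAu : u ⬝ᵥ (A *ᵥ u) = A i i := by rw [hu, single_dot_mulVec_single]
    have huAw : u ⬝ᵥ (A *ᵥ w) = c * A i i + s * A i j := by
      rw [hu, hAw]
      simp only [dotProduct_add, dotProduct_smul, single_dot_mulVec_single, smul_eq_mul]
    have horthW : (hh u * hh w)ᵀ * (hh u * hh w) = 1 := by
      rw [transpose_mul, Matrix.mul_assoc, ← Matrix.mul_assoc (hh u)ᵀ, hh_orth u hune,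
        Matrix.one_mul, hh_orth w hwne]
    have h := hmax _ horthW
    have hexp : ((hh u * hh w)ᵀ * A).trace
        = A.trace - 2 * (u ⬝ᵥ (A *ᵥ u)) - 2 * (w ⬝ᵥ (A *ᵥ w))
          + 4 * (w ⬝ᵥ u) * (u ⬝ᵥ (A *ᵥ w)) := by
      rw [transpose_mul, hh_transpose, hh_transpose]
      rw [hh, hh, huu, hww, div_one]
      simp only [Matrix.sub_mul, Matrix.mul_sub, Matrix.smul_mul, Matrix.mul_smul,
        Matrix.one_mul, Matrix.mul_one, vecMulVec_mul_vecMulVec, smul_smul,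
        trace_sub, trace_smul, trace_vecMulVec_mul, smul_eq_mul]
      ring
    rw [hexp] at h
    rw [hwAw, huAu, huAw, hwu] at h
    have hc2 : c^2 = 1 - s^2 := by linarith
    have hrw : c^2 * A i i = A i i - s^2 * A i i := by rw [hc2]; ring
    rw [hα, hβ]
    nlinarith [h, hrw]
  have hβ0 : β = 0 := by
    by_contra hb
    have habs : 0 < |β| := abs_pos.mpr hb
    set s₀ : ℝ := |β| / (2 * (α + |β|)) with hs₀
    have hden : 0 < α + |β| := by linarith
    have hs₀pos : 0 < s₀ := div_pos habs (by linarith)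
    have hs₀le : s₀ ≤ 1/2 := by
      rw [hs₀, div_le_iff₀ (by linarith)]
      nlinarith
    have h1s : 0 ≤ 1 - s₀^2 := by nlinarith
    set c₀ : ℝ := Real.sqrt (1 - s₀^2) with hc₀
    have hc₀sq : c₀^2 = 1 - s₀^2 := Real.sq_sqrt h1s
    have hcs : c₀^2 + s₀^2 = 1 := by rw [hc₀sq]; ring
    have hc₀ge : 1/2 ≤ c₀ := by
      rw [hc₀]
      have : (1/2 : ℝ) = Real.sqrt (1/4) := by
        rw [show (1/4 : ℝ) = (1/2)^2 by norm_num, Real.sqrt_sq (by norm_num)]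
      rw [this]
      apply Real.sqrt_le_sqrt
      nlinarith
    have k1 := key c₀ s₀ hcs
    have k2 := key c₀ (-s₀) (by rw [neg_pow]; simpa using hcs)
    have hc0b : c₀ * s₀ * |β| ≤ s₀^2 * α := by
      rcases abs_cases β with ⟨he, _⟩ | ⟨he, _⟩ <;> nlinarith
    have hfin : c₀ * |β| ≤ s₀ * α := by
      have := mul_le_mul_of_nonneg_left hc0b (le_of_lt (inv_pos.mpr hs₀pos))
      calc c₀ * |β| = s₀⁻¹ * (c₀ * s₀ * |β|) := by field_simp
        _ ≤ s₀⁻¹ * (s₀^2 * α) := this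
        _ = s₀ * α := by field_simp
    have hs₀α : s₀ * α * (2 * (α + |β|)) = α * |β| := by
      rw [hs₀]; field_simp
    have h5 : c₀ * |β| * (2 * (α + |β|)) ≤ s₀ * α * (2 * (α + |β|)) :=
      mul_le_mul_of_nonneg_right hfin (by linarith)
    rw [hs₀α] at h5
    have h6 : |β| * (α + |β|) ≤ c₀ * |β| * (2 * (α + |β|)) := by
      nlinarith [mul_pos habs hden, hc₀ge]
    have h7 : |β| * (α + |β|) ≤ α * |β| := le_trans h6 h5
    nlinarith [h7, mul_pos habs habs]
  rw [hβ] at hβ0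
  linarith

end maximizer

section tracebound

lemma psd_trace_nonneg {d : ℕ} {N : Matrix (Fin d) (Fin d) ℝ} (hN : N.PosSemidef) :
    0 ≤ N.trace := by
  have h : ∀ i, 0 ≤ N i i := by
    intro i
    have := hN.dotProduct_mulVec_nonneg (Pi.single i 1)
    rwa [star_trivial, single_dot_mulVec_single] at this
  exact Finset.sum_nonneg fun i _ => h i

lemma dot_cauchy {d : ℕ} (v w : Fin d → ℝ) : (v ⬝ᵥ w)^2 ≤ (v ⬝ᵥ v) * (w ⬝ᵥ w) := by
  have := Finset.sum_mul_sq_le_sq_mul_sq Finset.univ v w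
  simpa [dotProduct, sq] using this

open scoped MatrixOrder in
lemma trace_bound {d : ℕ} (A : Matrix (Fin d) (Fin d) ℝ) (m : ℝ) (hm : 0 ≤ m)
    (hsym : Aᵀ = A) (hquad : ∀ v, 0 ≤ v ⬝ᵥ (A *ᵥ v))
    (hAA : ∀ v, (A *ᵥ v) ⬝ᵥ (A *ᵥ v) ≤ m^2 * (v ⬝ᵥ v)) :
    (Aᵀ * A).trace ≤ m * A.trace := by
  have herm : A.IsHermitian := by
    rw [Matrix.IsHermitian, conjTranspose_eq_transpose_of_trivial, hsym]
  have hA : A.PosSemidef := PosSemidef.of_dotProduct_mulVec_nonneg herm fun x => by simpa using hquad x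
  have hMherm : ((m : ℝ) • (1 : Matrix (Fin d) (Fin d) ℝ) - A).PosSemidef := by
    refine PosSemidef.of_dotProduct_mulVec_nonneg ?_ ?_
    · rw [Matrix.IsHermitian, conjTranspose_eq_transpose_of_trivial, transpose_sub,
        transpose_smul, transpose_one, hsym]
    · intro x
      rw [star_trivial, sub_mulVec, dotProduct_sub, smul_mulVec, one_mulVec,
        dotProduct_smul]
      have hcs := dot_cauchy x (A *ᵥ x)
      have h2 := hAA x
      have h3 := hquad x
      have h4 : 0 ≤ x ⬝ᵥ x := Finset.sum_nonneg fun i _ => mul_self_nonneg _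
      have h5 : (x ⬝ᵥ (A *ᵥ x))^2 ≤ (m * (x ⬝ᵥ x))^2 := by
        calc (x ⬝ᵥ (A *ᵥ x))^2 ≤ (x ⬝ᵥ x) * ((A *ᵥ x) ⬝ᵥ (A *ᵥ x)) := hcs
          _ ≤ (x ⬝ᵥ x) * (m^2 * (x ⬝ᵥ x)) := by nlinarith
          _ = (m * (x ⬝ᵥ x))^2 := by ring
      have h6 : 0 ≤ m * (x ⬝ᵥ x) := mul_nonneg hm h4
      simp only [smul_eq_mul]
      nlinarith [h5, h6, h3]
  have key : 0 ≤ (A * ((m : ℝ) • (1 : Matrix (Fin d) (Fin d) ℝ) - A)).trace := by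
    have hs : (CFC.sqrt A).PosSemidef := (CFC.sqrt_nonneg A).posSemidef
    have hss : CFC.sqrt A * CFC.sqrt A = A := CFC.sqrt_mul_sqrt_self A hA.nonneg
    have h1 : A * ((m : ℝ) • (1 : Matrix (Fin d) (Fin d) ℝ) - A)
        = CFC.sqrt A * (CFC.sqrt A * ((m : ℝ) • 1 - A)) := by
      rw [← Matrix.mul_assoc, hss]
    rw [h1, trace_mul_comm]
    have h2 : CFC.sqrt A * ((m : ℝ) • 1 - A) * CFC.sqrt A
        = (CFC.sqrt A)ᴴ * ((m : ℝ) • 1 - A) * CFC.sqrt A := by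
      rw [hs.1]
    have h3 := (hMherm.conjTranspose_mul_mul_same (CFC.sqrt A))
    rw [← Matrix.mul_assoc] at *
    exact psd_trace_nonneg (by rw [h2]; exact h3)
  have hexp : (A * ((m : ℝ) • (1 : Matrix (Fin d) (Fin d) ℝ) - A)).trace
      = m * A.trace - (Aᵀ * A).trace := by
    rw [Matrix.mul_sub, Matrix.mul_smul, Matrix.mul_one, trace_sub, trace_smul, smul_eq_mul,
      hsym]
  linarith [key, hexp.le]

end tracebound

section projection

lemma proj_identity (d m : ℕ) (hm : 0 < m)
    (S₀ : Matrix (Fin (m * d)) (Fin d) ℝ)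
    (hS₀ : S₀ᵀ * S₀ = (m : ℝ) • 1)
    (U₀ : Matrix (Fin (m * d)) (Fin ((m - 1) * d)) ℝ)
    (hU₀ : U₀ᵀ * U₀ = 1) (hSU : S₀ᵀ * U₀ = 0)
    (hspan : ∀ v : Fin (m * d) → ℝ, S₀ᵀ.mulVec v = 0 →
      ∃ w : Fin ((m - 1) * d) → ℝ, v = U₀.mulVec w) :
    S₀ * S₀ᵀ + (m : ℝ) • (U₀ * U₀ᵀ) = (m : ℝ) • 1 := by
  have hmR : (0 : ℝ) < (m : ℝ) := by exact_mod_cast hm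
  have hv : ∀ v : Fin (m * d) → ℝ,
      (S₀ * S₀ᵀ) *ᵥ v + (m : ℝ) • ((U₀ * U₀ᵀ) *ᵥ v) = (m : ℝ) • v := by
    intro v
    set p : Fin (m * d) → ℝ := ((m : ℝ)⁻¹) • (S₀ *ᵥ (S₀ᵀ *ᵥ v)) with hp
    have hS₀p : S₀ᵀ *ᵥ (v - p) = 0 := by
      rw [hp, mulVec_sub, mulVec_smul, mulVec_mulVec, mulVec_mulVec, hS₀,
        Matrix.smul_mul, Matrix.one_mul, smul_mulVec, smul_smul,
        inv_mul_cancel₀ (ne_of_gt hmR), one_smul, sub_self]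
    obtain ⟨w, hw⟩ := hspan _ hS₀p
    have hU₀S₀ : U₀ᵀ * S₀ = 0 := by
      have := congrArg transpose hSU
      rwa [transpose_mul, transpose_transpose, transpose_zero] at this
    have hU₀p : U₀ᵀ *ᵥ p = 0 := by
      rw [hp, mulVec_smul, mulVec_mulVec, mulVec_mulVec, hU₀S₀,
        Matrix.zero_mul, zero_mulVec, smul_zero]
    have hproj : (U₀ * U₀ᵀ) *ᵥ v = v - p := by
      have h1 : U₀ᵀ *ᵥ v = U₀ᵀ *ᵥ (v - p) := by
        rw [mulVec_sub, hU₀p, sub_zero]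
      rw [← mulVec_mulVec, h1, hw, mulVec_mulVec, mulVec_mulVec, Matrix.mul_assoc, hU₀,
        Matrix.mul_one]
    have hpm : (S₀ * S₀ᵀ) *ᵥ v = (m : ℝ) • p := by
      rw [hp, ← mulVec_mulVec, smul_smul, mul_inv_cancel₀ (ne_of_gt hmR), one_smul]
    rw [hproj, hpm, smul_sub]
    abel
  ext i j
  have := congrFun (hv (Pi.single j 1)) i
  simp only [Pi.add_apply, Pi.smul_apply, smul_eq_mul] at this
  rw [mulVec_single, mulVec_single] at this
  simpa [Matrix.add_apply, Matrix.one_apply, Pi.single_apply, mul_ite] using this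

end projection

/-- If `U₀` has orthonormal columns spanning the orthogonal complement of the
column span of `S₀`, then `‖U₀ᵀ S‖_F² ≥ ½ min_{Q ∈ O(d)} ‖S - S₀Q‖_F²`. -/
theorem stmt_13 (d m : ℕ)
    (S₀ S : Matrix (Fin (m * d)) (Fin d) ℝ)
    (hS₀ : S₀ᵀ * S₀ = (m : ℝ) • 1) (hS : Sᵀ * S = (m : ℝ) • 1)
    (U₀ : Matrix (Fin (m * d)) (Fin ((m - 1) * d)) ℝ)
    (hU₀ : U₀ᵀ * U₀ = 1) (hSU : S₀ᵀ * U₀ = 0)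
    (hspan : ∀ v : Fin (m * d) → ℝ, S₀ᵀ.mulVec v = 0 →
      ∃ w : Fin ((m - 1) * d) → ℝ, v = U₀.mulVec w) :
    frobSq (U₀ᵀ * S) ≥
      (1 / 2 : ℝ) * sInf {x : ℝ | ∃ Q : Matrix (Fin d) (Fin d) ℝ,
        Qᵀ * Q = 1 ∧ x = frobSq (S - S₀ * Q)} := by
  set T : Set ℝ := {x : ℝ | ∃ Q : Matrix (Fin d) (Fin d) ℝ,
    Qᵀ * Q = 1 ∧ x = frobSq (S - S₀ * Q)} with hT
  have hTlb : ∀ x ∈ T, (0:ℝ) ≤ x := by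
    rintro x ⟨Q, hQ, rfl⟩
    exact frobSq_nonneg _
  have hTbdd : BddBelow T := ⟨0, fun x hx => hTlb x hx⟩
  -- it suffices to exhibit one orthogonal Q with a good bound
  suffices hgood : ∃ Q : Matrix (Fin d) (Fin d) ℝ, Qᵀ * Q = 1 ∧
      frobSq (S - S₀ * Q) ≤ 2 * frobSq (U₀ᵀ * S) by
    obtain ⟨Q, hQ, hle⟩ := hgood
    have hmem : frobSq (S - S₀ * Q) ∈ T := ⟨Q, hQ, rfl⟩
    have h1 : sInf T ≤ frobSq (S - S₀ * Q) := csInf_le hTbdd hmem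
    linarith
  rcases Nat.eq_zero_or_pos m with hm0 | hm
  · -- degenerate case `m = 0`
    subst hm0
    haveI hie : IsEmpty (Fin (0 * d)) := by rw [Nat.zero_mul]; infer_instance
    refine ⟨(1 : Matrix (Fin d) (Fin d) ℝ), by simp, ?_⟩
    have hfz : frobSq (S - S₀ * (1 : Matrix (Fin d) (Fin d) ℝ)) = 0 := by
      rw [frobSq_eq_sum]
      simp
    rw [hfz]
    linarith [frobSq_nonneg (U₀ᵀ * S)]
  -- main case `m > 0`
  have hmR : (0 : ℝ) < (m : ℝ) := by exact_mod_cast hm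
  have hproj := proj_identity d m hm S₀ hS₀ U₀ hU₀ hSU hspan
  set R : Matrix (Fin d) (Fin d) ℝ := S₀ᵀ * S with hR
  obtain ⟨Q, hQ, hQmax⟩ := exists_max_orth d R
  have hQQT : Q * Qᵀ = 1 := mul_eq_one_comm.mp hQ
  set A : Matrix (Fin d) (Fin d) ℝ := Qᵀ * R with hA
  have hmax' : ∀ W : Matrix (Fin d) (Fin d) ℝ, Wᵀ * W = 1 →
      (Wᵀ * A).trace ≤ A.trace := by
    intro W hW
    have h1 : (Q * W)ᵀ * (Q * W) = 1 := by
      rw [transpose_mul, Matrix.mul_assoc, ← Matrix.mul_assoc Qᵀ Q W, hQ, Matrix.one_mul, hW]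
    have h2 := hQmax (Q * W) h1
    rwa [transpose_mul, Matrix.mul_assoc, ← hA] at h2
  have hsym := sym_of_max A hmax'
  have hquad := quad_nonneg_of_max A hmax'
  have hATA : Aᵀ * A = Rᵀ * R := by
    rw [hA, transpose_mul, transpose_transpose, Matrix.mul_assoc,
      ← Matrix.mul_assoc Q Qᵀ R, hQQT, Matrix.one_mul]
  have hSSt : S₀ * S₀ᵀ = (m : ℝ) • 1 - (m : ℝ) • (U₀ * U₀ᵀ) := by
    rw [← hproj]; abel
  have hAA : ∀ v, (A *ᵥ v) ⬝ᵥ (A *ᵥ v) ≤ ((m : ℝ))^2 * (v ⬝ᵥ v) := by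
    intro v
    have e1 : (A *ᵥ v) ⬝ᵥ (A *ᵥ v) = v ⬝ᵥ ((Rᵀ * R) *ᵥ v) := by
      rw [← dot_BtB, hATA]
    have e2 : v ⬝ᵥ ((Rᵀ * R) *ᵥ v) = (R *ᵥ v) ⬝ᵥ (R *ᵥ v) := dot_BtB R v
    set y : Fin (m * d) → ℝ := S *ᵥ v with hy
    have e3 : R *ᵥ v = S₀ᵀ *ᵥ y := by rw [hR, ← mulVec_mulVec]
    have e4 : (S₀ᵀ *ᵥ y) ⬝ᵥ (S₀ᵀ *ᵥ y) = y ⬝ᵥ ((S₀ * S₀ᵀ) *ᵥ y) := by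
      have := dot_BtB S₀ᵀ y
      rw [transpose_transpose] at this
      exact this.symm
    have e5 : 0 ≤ y ⬝ᵥ ((U₀ * U₀ᵀ) *ᵥ y) := by
      have := dot_BtB U₀ᵀ y
      rw [transpose_transpose] at this
      rw [this]
      exact Finset.sum_nonneg fun i _ => mul_self_nonneg _
    have e6 : y ⬝ᵥ y = (m : ℝ) * (v ⬝ᵥ v) := by
      have := dot_BtB S v
      rw [hS] at this
      rw [hy, ← this, smul_mulVec, one_mulVec, dotProduct_smul, smul_eq_mul]
    have e7 : y ⬝ᵥ ((S₀ * S₀ᵀ) *ᵥ y) ≤ (m : ℝ) * (y ⬝ᵥ y) := by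
      rw [hSSt, sub_mulVec, dotProduct_sub, smul_mulVec, one_mulVec, dotProduct_smul,
        smul_mulVec, dotProduct_smul, smul_eq_mul, smul_eq_mul]
      nlinarith [e5]
    calc (A *ᵥ v) ⬝ᵥ (A *ᵥ v) = y ⬝ᵥ ((S₀ * S₀ᵀ) *ᵥ y) := by rw [e1, e2, e3, e4]
      _ ≤ (m : ℝ) * (y ⬝ᵥ y) := e7
      _ = ((m : ℝ))^2 * (v ⬝ᵥ v) := by rw [e6]; ring
  have htb := trace_bound A (m : ℝ) (le_of_lt hmR) hsym hquad hAA
  -- trace computations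
  have htr1 : (Sᵀ * S).trace = (m : ℝ) * d := by
    rw [hS, trace_smul, trace_one, smul_eq_mul]
    simp
  have ht2 : (m : ℝ) * frobSq (U₀ᵀ * S) = (m : ℝ)^2 * d - (Rᵀ * R).trace := by
    have hmatrix : (m : ℝ) • ((Sᵀ * U₀) * (U₀ᵀ * S))
        = (m : ℝ) • (Sᵀ * S) - (Sᵀ * S₀) * (S₀ᵀ * S) := by
      have : (m : ℝ) • ((Sᵀ * U₀) * (U₀ᵀ * S)) = Sᵀ * ((m : ℝ) • (U₀ * U₀ᵀ)) * S := by
        simp only [Matrix.mul_smul, Matrix.smul_mul, Matrix.mul_assoc]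
      rw [this]
      have h2 : (m : ℝ) • (U₀ * U₀ᵀ) = (m : ℝ) • 1 - S₀ * S₀ᵀ := by
        rw [← hproj]; abel
      rw [h2, Matrix.mul_sub, Matrix.sub_mul, Matrix.mul_smul, Matrix.mul_one,
        Matrix.smul_mul]
      simp only [Matrix.mul_assoc]
    have := congrArg Matrix.trace hmatrix
    rw [trace_smul, trace_sub, trace_smul, smul_eq_mul, smul_eq_mul, htr1] at this
    have hfr : frobSq (U₀ᵀ * S) = ((Sᵀ * U₀) * (U₀ᵀ * S)).trace := by
      rw [frobSq, transpose_mul, transpose_transpose]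
    have hRt : (Rᵀ * R).trace = ((Sᵀ * S₀) * (S₀ᵀ * S)).trace := by
      rw [hR, transpose_mul, transpose_transpose]
    rw [hfr, hRt, this]
    ring
  have ht3 : frobSq (S - S₀ * Q) = 2 * ((m : ℝ) * d) - 2 * A.trace := by
    have hexp : (S - S₀ * Q)ᵀ * (S - S₀ * Q)
        = Sᵀ * S - Sᵀ * (S₀ * Q) - (Qᵀ * S₀ᵀ) * S + Qᵀ * ((m : ℝ) • 1) * Q := by
      rw [transpose_sub, transpose_mul, Matrix.sub_mul, Matrix.mul_sub, Matrix.mul_sub,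
        ← hS₀]
      simp only [Matrix.mul_assoc]
      abel
    have htA : (Sᵀ * (S₀ * Q)).trace = A.trace := by
      rw [← Matrix.mul_assoc]
      have h1 : Sᵀ * S₀ * Q = Aᵀ := by
        rw [hA, transpose_mul, hR, transpose_mul, transpose_transpose, transpose_transpose]
      rw [h1, trace_transpose]
    have htB : ((Qᵀ * S₀ᵀ) * S).trace = A.trace := by
      rw [Matrix.mul_assoc, hA, hR]
    have htC : (Qᵀ * ((m : ℝ) • 1) * Q).trace = (m : ℝ) * d := by
      rw [Matrix.mul_smul, Matrix.mul_one, Matrix.smul_mul, hQ, trace_smul, trace_one,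
        smul_eq_mul]
      simp
    rw [frobSq, hexp, trace_add, trace_sub, trace_sub, htr1, htA, htB, htC]
    ring
  have h8 : (Rᵀ * R).trace ≤ (m : ℝ) * A.trace := by rw [← hATA]; exact htb
  have h9 : (m : ℝ) * ((m : ℝ) * d - A.trace) ≤ (m : ℝ) * frobSq (U₀ᵀ * S) := by
    nlinarith [h8, ht2]
  have h10 : (m : ℝ) * d - A.trace ≤ frobSq (U₀ᵀ * S) := le_of_mul_le_mul_left h9 hmR
  exact ⟨Q, hQ, by rw [ht3]; linarith [h10]⟩
end

section
/- Let C_0 and C be real symmetric md×md matrices, with C_0 positive semidefinite with kernel exactly the column span of S_0 ∈ R^{md×d} where S_0^T S_0 = m·I_d. Suppose S* ∈ R^{md×d} satisfies S*^T S* = m·I_d and Tr(C S* S*^T) ≤ Tr(C S_0 Q (S_0 Q)^T) for all orthogonal Q ∈ O(d). Then min over Q ∈ O(d) of ||S* - S_0 Q||_F ≤ 4m·||C - C_0||_F / λ_{d+1}(C_0), where λ_{d+1}(C_0) is the smallest nonzero eigenvalue of C_0. -/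
open Matrix

/-- Frobenius norm of a rectangular real matrix. -/
noncomputable def frobNorm {p q : ℕ} (A : Matrix (Fin p) (Fin q) ℝ) : ℝ :=
  Real.sqrt (Aᵀ * A).trace

section Aux

lemma trace_tmul_eq {p q : ℕ} (A B : Matrix (Fin p) (Fin q) ℝ) :
    (Aᵀ * B).trace = ∑ x : (Fin q) × (Fin p), A x.2 x.1 * B x.2 x.1 := by
  rw [Fintype.sum_prod_type]
  simp [Matrix.trace, Matrix.mul_apply, Matrix.diag]

lemma trace_tA_nonneg {p q : ℕ} (A : Matrix (Fin p) (Fin q) ℝ) :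
    0 ≤ (Aᵀ * A).trace := by
  rw [trace_tmul_eq]
  exact Finset.sum_nonneg fun x _ => mul_self_nonneg _

lemma frob_nonneg {p q : ℕ} (A : Matrix (Fin p) (Fin q) ℝ) : 0 ≤ frobNorm A :=
  Real.sqrt_nonneg _

lemma frob_sq {p q : ℕ} (A : Matrix (Fin p) (Fin q) ℝ) :
    frobNorm A ^ 2 = (Aᵀ * A).trace :=
  Real.sq_sqrt (trace_tA_nonneg A)

lemma frob_neg {p q : ℕ} (A : Matrix (Fin p) (Fin q) ℝ) : frobNorm (-A) = frobNorm A := by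
  unfold frobNorm
  rw [Matrix.transpose_neg, Matrix.neg_mul, Matrix.mul_neg, neg_neg]

lemma cs_trace {p q : ℕ} (A B : Matrix (Fin p) (Fin q) ℝ) :
    (Aᵀ * B).trace ≤ frobNorm A * frobNorm B := by
  rw [trace_tmul_eq]
  have h := Real.sum_mul_le_sqrt_mul_sqrt Finset.univ
    (fun x : (Fin q) × (Fin p) => A x.2 x.1) (fun x => B x.2 x.1)
  refine h.trans_eq ?_
  unfold frobNorm
  rw [trace_tmul_eq, trace_tmul_eq]
  simp [pow_two]

lemma dot_cs {p : ℕ} (x y : Fin p → ℝ) : (x ⬝ᵥ y)^2 ≤ (x ⬝ᵥ x) * (y ⬝ᵥ y) := by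
  have h := Finset.sum_mul_sq_le_sq_mul_sq Finset.univ x y
  simpa [dotProduct, pow_two] using h

lemma dot_self_nonneg' {p : ℕ} (x : Fin p → ℝ) : 0 ≤ x ⬝ᵥ x :=
  Finset.sum_nonneg fun _ _ => mul_self_nonneg _

lemma vecMul_symm {p : ℕ} {M : Matrix (Fin p) (Fin p) ℝ} (hM : Mᵀ = M) (x : Fin p → ℝ) :
    x ᵥ* M = M *ᵥ x := by
  conv_lhs => rw [← hM]
  exact Matrix.vecMul_transpose M x

lemma mulVec_dot_mulVec {p : ℕ} (M : Matrix (Fin p) (Fin p) ℝ) (hM : Mᵀ = M) (x : Fin p → ℝ) :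
    (M *ᵥ x) ⬝ᵥ (M *ᵥ x) = x ⬝ᵥ ((M * M) *ᵥ x) := by
  rw [← Matrix.mulVec_mulVec, Matrix.dotProduct_mulVec, vecMul_symm hM]
  exact dotProduct_comm _ _

lemma dot_gram' {p q : ℕ} (B : Matrix (Fin p) (Fin q) ℝ) (x : Fin q → ℝ) :
    x ⬝ᵥ ((Bᵀ * B) *ᵥ x) = (B *ᵥ x) ⬝ᵥ (B *ᵥ x) := by
  rw [← Matrix.mulVec_mulVec, Matrix.dotProduct_mulVec]
  congr 1
  rw [Matrix.vecMul_transpose]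

lemma quad_le_of_proj {p : ℕ} {P : Matrix (Fin p) (Fin p) ℝ} {c : ℝ}
    (hsym : Pᵀ = P) (hpsd : ∀ x, 0 ≤ x ⬝ᵥ (P *ᵥ x)) (hPP : P * P = c • P) (hc : 0 ≤ c) :
    ∀ x, x ⬝ᵥ (P *ᵥ x) ≤ c * (x ⬝ᵥ x) := by
  intro x
  have h1 : (x ⬝ᵥ (P *ᵥ x))^2 ≤ (x ⬝ᵥ x) * ((P *ᵥ x) ⬝ᵥ (P *ᵥ x)) := dot_cs x (P *ᵥ x)
  have h2 : (P *ᵥ x) ⬝ᵥ (P *ᵥ x) = c * (x ⬝ᵥ (P *ᵥ x)) := by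
    rw [mulVec_dot_mulVec P hsym, hPP, Matrix.smul_mulVec, dotProduct_smul, smul_eq_mul]
  rcases lt_or_ge 0 (x ⬝ᵥ (P *ᵥ x)) with hx | hx
  · refine le_of_mul_le_mul_right ?_ hx
    rw [h2] at h1
    nlinarith [h1]
  · exact hx.trans (mul_nonneg hc (dot_self_nonneg' x))

lemma quad_le_of_sq {p : ℕ} {M : Matrix (Fin p) (Fin p) ℝ} {c : ℝ}
    (hsym : Mᵀ = M) (hpsd : ∀ x, 0 ≤ x ⬝ᵥ (M *ᵥ x))
    (hMM : ∀ x, x ⬝ᵥ ((M * M) *ᵥ x) ≤ c^2 * (x ⬝ᵥ x)) (hc : 0 ≤ c) :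
    ∀ x, x ⬝ᵥ (M *ᵥ x) ≤ c * (x ⬝ᵥ x) := by
  intro x
  have h1 : (x ⬝ᵥ (M *ᵥ x))^2 ≤ (x ⬝ᵥ x) * ((M *ᵥ x) ⬝ᵥ (M *ᵥ x)) := dot_cs x (M *ᵥ x)
  rw [mulVec_dot_mulVec M hsym] at h1
  have h2 := hMM x
  have h3 := hpsd x
  have h4 := dot_self_nonneg' x
  nlinarith [h1, h2, h3, h4, mul_nonneg hc h4]

lemma posSemidef_of {p : ℕ} {M : Matrix (Fin p) (Fin p) ℝ} (hsym : Mᵀ = M)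
    (h : ∀ x, 0 ≤ x ⬝ᵥ (M *ᵥ x)) : M.PosSemidef := by
  refine Matrix.PosSemidef.of_dotProduct_mulVec_nonneg ?_ ?_
  · rw [Matrix.IsHermitian, Matrix.conjTranspose_eq_transpose_of_trivial, hsym]
  · intro x; simpa using h x

lemma trace_psd_nonneg {p : ℕ} {A : Matrix (Fin p) (Fin p) ℝ} (hA : A.PosSemidef) :
    0 ≤ A.trace := by
  have h : ∀ i, 0 ≤ A i i := by
    intro i
    have h := hA.dotProduct_mulVec_nonneg (Pi.single i 1)
    simpa [dotProduct, Matrix.mulVec, Pi.single_apply] using h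
  exact Finset.sum_nonneg fun i _ => h i

open scoped MatrixOrder in
lemma trace_psd_mul_nonneg {p : ℕ} {A B : Matrix (Fin p) (Fin p) ℝ}
    (hA : A.PosSemidef) (hB : B.PosSemidef) : 0 ≤ (A * B).trace := by
  have hs : CFC.sqrt A * CFC.sqrt A = A := CFC.sqrt_mul_sqrt_self A hA.nonneg
  have h1 : (CFC.sqrt A * B * (CFC.sqrt A)ᴴ).trace = (A * B).trace := by
    rw [(CFC.sqrt_nonneg A).posSemidef.isHermitian.eq, Matrix.mul_assoc, Matrix.trace_mul_comm,
      Matrix.mul_assoc, hs, Matrix.trace_mul_comm]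
  rw [← h1]
  exact trace_psd_nonneg (hB.mul_mul_conjTranspose_same (CFC.sqrt A))

lemma gram_quad {p q : ℕ} {S : Matrix (Fin p) (Fin q) ℝ} {c : ℝ} (hc : 0 ≤ c)
    (hS : Sᵀ * S = c • 1) :
    (∀ x, x ⬝ᵥ ((S * Sᵀ) *ᵥ x) ≤ c * (x ⬝ᵥ x)) ∧ (c • 1 - S * Sᵀ).PosSemidef := by
  have hsym : (S * Sᵀ)ᵀ = S * Sᵀ := by
    rw [Matrix.transpose_mul, Matrix.transpose_transpose]
  have hquad : ∀ x, x ⬝ᵥ ((S * Sᵀ) *ᵥ x) = (Sᵀ *ᵥ x) ⬝ᵥ (Sᵀ *ᵥ x) := by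
    intro x
    have h := dot_gram' Sᵀ x
    rwa [Matrix.transpose_transpose] at h
  have hpsd : ∀ x, 0 ≤ x ⬝ᵥ ((S * Sᵀ) *ᵥ x) := fun x => by
    rw [hquad]; exact dot_self_nonneg' _
  have hPP : (S * Sᵀ) * (S * Sᵀ) = c • (S * Sᵀ) := by
    rw [Matrix.mul_assoc, ← Matrix.mul_assoc Sᵀ S Sᵀ, hS, Matrix.smul_mul, Matrix.one_mul,
      Matrix.mul_smul]
  have hle := quad_le_of_proj hsym hpsd hPP hc
  refine ⟨hle, posSemidef_of ?_ ?_⟩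
  · rw [Matrix.transpose_sub, Matrix.transpose_smul, Matrix.transpose_one, hsym]
  · intro x
    have h : (c • 1 - S * Sᵀ) *ᵥ x = c • x - (S * Sᵀ) *ᵥ x := by
      rw [Matrix.sub_mulVec, Matrix.smul_mulVec, Matrix.one_mulVec]
    rw [h, dotProduct_sub, dotProduct_smul, smul_eq_mul]
    linarith [hle x]

lemma trace_stdBasis_mul {d : ℕ} (i j : Fin d) (M : Matrix (Fin d) (Fin d) ℝ) :
    (Matrix.single i j (1:ℝ) * M).trace = M j i := by
  simp [Matrix.trace, Matrix.diag, Matrix.mul_apply, Matrix.single, Matrix.of_apply,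
    ite_and]

lemma transpose_stdBasis {d : ℕ} (i j : Fin d) :
    (Matrix.single i j (1:ℝ))ᵀ = Matrix.single j i 1 := by
  ext a b
  simp [Matrix.single, Matrix.transpose_apply, Matrix.of_apply, and_comm]

lemma sym_of_max_s14 {d : ℕ} {M : Matrix (Fin d) (Fin d) ℝ}
    (h : ∀ R : Matrix (Fin d) (Fin d) ℝ, Rᵀ * R = 1 → (R * M).trace ≤ M.trace) :
    Mᵀ = M := by
  ext i j
  rw [Matrix.transpose_apply]
  rcases eq_or_ne i j with rfl | hij
  · rfl
  set K : Matrix (Fin d) (Fin d) ℝ := Matrix.single i i 1 + Matrix.single j j 1 with hK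
  set W : Matrix (Fin d) (Fin d) ℝ := Matrix.single j i 1 - Matrix.single i j 1 with hW
  have hKK : K * K = K := by
    simp [hK, add_mul, mul_add, Matrix.single_mul_single_same, Matrix.single_mul_single_of_ne, hij, hij.symm]
  have hWW : W * W = -K := by
    simp only [hW, hK, sub_mul, mul_sub, Matrix.single_mul_single_same, mul_one,
      Matrix.single_mul_single_of_ne, hij, hij.symm, ne_eq, not_false_eq_true]
    abel
  have hKW : K * W = W := by
    simp only [hK, hW, add_mul, mul_sub, Matrix.single_mul_single_same, mul_one,
      Matrix.single_mul_single_of_ne, hij, hij.symm, ne_eq, not_false_eq_true]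
    abel
  have hWK : W * K = W := by
    simp only [hW, hK, sub_mul, mul_add, Matrix.single_mul_single_same, mul_one,
      Matrix.single_mul_single_of_ne, hij, hij.symm, ne_eq, not_false_eq_true]
    abel
  have hKT : Kᵀ = K := by
    simp only [hK, Matrix.transpose_add, transpose_stdBasis]
  have hWT : Wᵀ = -W := by
    simp only [hW, Matrix.transpose_sub, transpose_stdBasis]
    abel
  have hTrK : (K * M).trace = M i i + M j j := by
    simp only [hK, add_mul, Matrix.trace_add, trace_stdBasis_mul]
  have hTrW : (W * M).trace = M i j - M j i := by
    simp only [hW, sub_mul, Matrix.trace_sub, trace_stdBasis_mul]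
  have key : ∀ t : ℝ, t * (M i j - M j i) ≤ t ^ 2 * (M i i + M j j) := by
    intro t
    have hden : (0:ℝ) < 1 + t ^ 2 := by positivity
    set a : ℝ := -2 * t ^ 2 / (1 + t ^ 2) with ha
    set s : ℝ := 2 * t / (1 + t ^ 2) with hs
    have hscal : 2 * a + a ^ 2 + s ^ 2 = 0 := by
      rw [ha, hs]
      field_simp
      ring
    set R : Matrix (Fin d) (Fin d) ℝ := 1 + a • K + s • W with hR
    have hRorth : Rᵀ * R = 1 := by
      have hRT : Rᵀ = 1 + a • K - s • W := by
        simp only [hR, Matrix.transpose_add, Matrix.transpose_one, Matrix.transpose_smul,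
          hKT, hWT, smul_neg]
        abel
      rw [hRT, hR]
      have expand : (1 + a • K - s • W) * (1 + a • K + s • W)
          = 1 + (2 * a + a ^ 2 + s ^ 2) • K := by
        simp only [mul_add, add_mul, sub_mul, mul_sub, Matrix.one_mul, Matrix.mul_one,
          Matrix.smul_mul, Matrix.mul_smul, hKK, hWW, hKW, hWK, smul_smul, smul_neg]
        module
      rw [expand, hscal, zero_smul, add_zero]
    have hle := h R hRorth
    have hTrR : (R * M).trace = M.trace + a * (M i i + M j j) + s * (M i j - M j i) := by
      simp only [hR, add_mul, Matrix.one_mul, Matrix.smul_mul, Matrix.trace_add,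
        Matrix.trace_smul, hTrK, hTrW, smul_eq_mul]
    rw [hTrR] at hle
    have h2 : a * (M i i + M j j) + s * (M i j - M j i) ≤ 0 := by linarith
    rw [ha, hs] at h2
    rw [div_mul_eq_mul_div, div_mul_eq_mul_div, ← add_div, div_nonpos_iff] at h2
    rcases h2 with ⟨h2, _⟩ | ⟨h2, h3⟩
    · nlinarith [h2]
    · linarith [h3, hden]
  by_contra hne
  set c0 : ℝ := M i j - M j i with hc0
  set b : ℝ := M i i + M j j with hb
  have hc0ne : c0 ≠ 0 := fun hc => hne (by rw [hc0] at hc; linarith)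
  set N : ℝ := b ^ 2 + c0 ^ 2 + 1 with hN
  have hNpos : (0:ℝ) < N := by positivity
  have hNb : b < N := by nlinarith [sq_nonneg c0, sq_nonneg (b - 1)]
  have hc0sq : 0 < c0 ^ 2 := by positivity
  have hfin := key (c0 / N)
  rw [div_pow, div_mul_eq_mul_div, div_mul_eq_mul_div,
    div_le_div_iff₀ hNpos (by positivity)] at hfin
  nlinarith [hfin, hNpos, hc0sq, hNb, mul_lt_mul_of_pos_left hNb (mul_pos hc0sq hNpos)]

lemma psd_of_max {d : ℕ} {M : Matrix (Fin d) (Fin d) ℝ}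
    (h : ∀ R : Matrix (Fin d) (Fin d) ℝ, Rᵀ * R = 1 → (R * M).trace ≤ M.trace) :
    ∀ v : Fin d → ℝ, 0 ≤ v ⬝ᵥ (M *ᵥ v) := by
  intro v
  rcases eq_or_ne (v ⬝ᵥ v) 0 with hv | hv
  · have hv0 : v = 0 := by
      funext k
      have h1 := (Finset.sum_eq_zero_iff_of_nonneg
        (fun i _ => mul_self_nonneg (v i))).mp hv k (Finset.mem_univ k)
      exact mul_self_eq_zero.mp h1
    simp [hv0]
  · have hρ : 0 < v ⬝ᵥ v :=
      lt_of_le_of_ne (Finset.sum_nonneg fun i _ => mul_self_nonneg _) (Ne.symm hv)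
    set ρ : ℝ := v ⬝ᵥ v with hρdef
    set P : Matrix (Fin d) (Fin d) ℝ := vecMulVec v v with hPdef
    have hPT : Pᵀ = P := by
      ext a b; simp [hPdef, Matrix.vecMulVec_apply, mul_comm]
    have hPP : P * P = ρ • P := by
      ext a b
      simp only [hPdef, Matrix.mul_apply, Matrix.vecMulVec_apply, Matrix.smul_apply,
        smul_eq_mul, hρdef, dotProduct]
      rw [Finset.sum_mul]
      exact Finset.sum_congr rfl fun k _ => by ring
    set r : ℝ := 2 / ρ with hr
    set R : Matrix (Fin d) (Fin d) ℝ := 1 - r • P with hRdef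
    have hRT : Rᵀ = R := by
      simp only [hRdef, Matrix.transpose_sub, Matrix.transpose_one, Matrix.transpose_smul, hPT]
    have hscal : r * r * ρ - 2 * r = 0 := by
      rw [hr]; field_simp; ring
    have hRorth : Rᵀ * R = 1 := by
      rw [hRT, hRdef]
      have expand : (1 - r • P) * (1 - r • P) = 1 + (r * r * ρ - 2 * r) • P := by
        simp only [mul_sub, sub_mul, Matrix.one_mul, Matrix.mul_one,
          Matrix.smul_mul, Matrix.mul_smul, hPP, smul_smul]
        module
      rw [expand, hscal, zero_smul, add_zero]
    have htr := h R hRorth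
    have hTrP : (P * M).trace = v ⬝ᵥ (M *ᵥ v) := by
      simp only [Matrix.trace, Matrix.diag, Matrix.mul_apply, hPdef, Matrix.vecMulVec_apply,
        dotProduct, Matrix.mulVec, Finset.mul_sum]
      rw [Finset.sum_comm]
      exact Finset.sum_congr rfl fun k _ => Finset.sum_congr rfl fun a _ => by ring
    have hTrR : (R * M).trace = M.trace - r * (P * M).trace := by
      simp only [hRdef, sub_mul, Matrix.one_mul, Matrix.smul_mul, Matrix.trace_sub,
        Matrix.trace_smul, smul_eq_mul]
    rw [hTrR] at htr
    have hrpos : 0 < r := by rw [hr]; positivity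
    rw [← hTrP]
    nlinarith [htr, hrpos]

lemma exists_orth_max {d : ℕ} (A : Matrix (Fin d) (Fin d) ℝ) :
    ∃ Q : Matrix (Fin d) (Fin d) ℝ, Qᵀ * Q = 1 ∧
      ∀ R : Matrix (Fin d) (Fin d) ℝ, Rᵀ * R = 1 → (Rᵀ * A).trace ≤ (Qᵀ * A).trace := by
  set K : Set (Matrix (Fin d) (Fin d) ℝ) := {Q | Qᵀ * Q = 1} with hKdef
  have hK1 : (1 : Matrix (Fin d) (Fin d) ℝ) ∈ K := by
    simp [hKdef]
  have hcont : Continuous fun Q : Matrix (Fin d) (Fin d) ℝ => (Qᵀ * A).trace :=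
    ((continuous_id.matrix_transpose).matrix_mul continuous_const).matrix_trace
  have hclosed : IsClosed K := by
    have hc : Continuous fun Q : Matrix (Fin d) (Fin d) ℝ => Qᵀ * Q :=
      (continuous_id.matrix_transpose).matrix_mul continuous_id
    exact isClosed_singleton.preimage hc
  have hsub : K ⊆ Set.univ.pi fun _ : Fin d =>
      Set.univ.pi fun _ : Fin d => Set.Icc (-1 : ℝ) 1 := by
    intro Q hQ
    refine Set.mem_pi.mpr ?_
    intro i _
    rw [Set.mem_pi]
    intro j _
    have hdiag : ∑ k, Q k j * Q k j = 1 := by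
      have h := congrFun (congrFun hQ j) j
      simpa [Matrix.mul_apply] using h
    have hle : Q i j * Q i j ≤ 1 := by
      rw [← hdiag]
      exact Finset.single_le_sum (fun k _ => mul_self_nonneg (Q k j)) (Finset.mem_univ i)
    constructor <;> nlinarith [hle, mul_self_nonneg (Q i j)]
  have hKcompact : IsCompact K :=
    IsCompact.of_isClosed_subset
      (isCompact_univ_pi fun _ => isCompact_univ_pi fun _ => isCompact_Icc) hclosed hsub
  obtain ⟨Q, hQK, hQmax⟩ := hKcompact.exists_isMaxOn ⟨1, hK1⟩ hcont.continuousOn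
  exact ⟨Q, hQK, fun R hR => hQmax hR⟩

end Aux

set_option maxHeartbeats 2000000 in
/-- Stability of the optimal alignment: if `S*` is optimal for the perturbed
matrix `C`, then `min_{Q ∈ O(d)} ‖S* - S₀Q‖_F ≤ 4m ‖C - C₀‖_F / λ_{d+1}(C₀)`. -/
theorem stmt_14 (d m : ℕ)
    (C₀ C : Matrix (Fin (m * d)) (Fin (m * d)) ℝ)
    (hC₀sym : C₀ᵀ = C₀) (hCsym : Cᵀ = C)
    (hC₀ : C₀.PosSemidef)
    (S₀ : Matrix (Fin (m * d)) (Fin d) ℝ)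
    (hS₀ : S₀ᵀ * S₀ = (m : ℝ) • 1)
    (hker : ∀ v : Fin (m * d) → ℝ,
      C₀.mulVec v = 0 ↔ ∃ w : Fin d → ℝ, v = S₀.mulVec w)
    (lam : ℝ) (hlam_pos : 0 < lam)
    (hlam : ∀ x : Fin (m * d) → ℝ,
      (∀ y : Fin (m * d) → ℝ, C₀.mulVec y = 0 → x ⬝ᵥ y = 0) →
        lam * (x ⬝ᵥ x) ≤ x ⬝ᵥ C₀.mulVec x)
    (Sstar : Matrix (Fin (m * d)) (Fin d) ℝ)
    (hSstar : Sstarᵀ * Sstar = (m : ℝ) • 1)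
    (hopt : ∀ Q : Matrix (Fin d) (Fin d) ℝ, Qᵀ * Q = 1 →
      (C * Sstar * Sstarᵀ).trace ≤ (C * (S₀ * Q) * (S₀ * Q)ᵀ).trace) :
    sInf {x : ℝ | ∃ Q : Matrix (Fin d) (Fin d) ℝ,
        Qᵀ * Q = 1 ∧ x = frobNorm (Sstar - S₀ * Q)}
      ≤ 4 * m * frobNorm (C - C₀) / lam := by
  have hbdd : BddBelow {x : ℝ | ∃ Q : Matrix (Fin d) (Fin d) ℝ,
      Qᵀ * Q = 1 ∧ x = frobNorm (Sstar - S₀ * Q)} := by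
    refine ⟨0, fun x hx => ?_⟩
    obtain ⟨Q', _, hx⟩ := hx
    rw [hx]
    exact frob_nonneg _
  by_cases hm0 : m = 0
  · subst hm0
    haveI : IsEmpty (Fin (0 * d)) := by rw [Nat.zero_mul]; infer_instance
    have hzero : frobNorm (Sstar - S₀ * (1 : Matrix (Fin d) (Fin d) ℝ)) = 0 := by
      unfold frobNorm
      have h : ((Sstar - S₀ * (1 : Matrix (Fin d) (Fin d) ℝ))ᵀ
          * (Sstar - S₀ * (1 : Matrix (Fin d) (Fin d) ℝ))).trace = 0 := by
        rw [trace_tmul_eq]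
        apply Finset.sum_eq_zero
        intro x _
        exact (IsEmpty.false x.2).elim
      rw [h, Real.sqrt_zero]
    have hmem : (0:ℝ) ∈ {x : ℝ | ∃ Q : Matrix (Fin d) (Fin d) ℝ,
        Qᵀ * Q = 1 ∧ x = frobNorm (Sstar - S₀ * Q)} :=
      ⟨1, by simp, hzero.symm⟩
    have h := csInf_le hbdd hmem
    refine h.trans ?_
    simp only [Nat.cast_zero, mul_zero, zero_mul]
    positivity
  have hm1 : 1 ≤ m := Nat.one_le_iff_ne_zero.mpr hm0
  have hmR : (0:ℝ) < m := by exact_mod_cast Nat.pos_of_ne_zero hm0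
  have hmR1 : (1:ℝ) ≤ m := by exact_mod_cast hm1
  -- the optimal rotation
  set A' : Matrix (Fin d) (Fin d) ℝ := S₀ᵀ * Sstar with hA'
  obtain ⟨Q, hQ, hQmax⟩ := exists_orth_max A'
  have hQQT : Q * Qᵀ = 1 := mul_eq_one_comm.mp hQ
  set M : Matrix (Fin d) (Fin d) ℝ := Qᵀ * A' with hM
  have hMmax : ∀ R : Matrix (Fin d) (Fin d) ℝ, Rᵀ * R = 1 → (R * M).trace ≤ M.trace := by
    intro R hR
    have hR2 : (Q * Rᵀ)ᵀ * (Q * Rᵀ) = 1 := by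
      rw [Matrix.transpose_mul, Matrix.transpose_transpose, Matrix.mul_assoc,
        ← Matrix.mul_assoc Qᵀ Q Rᵀ, hQ, Matrix.one_mul, mul_eq_one_comm.mp hR]
    have h := hQmax (Q * Rᵀ) hR2
    rw [Matrix.transpose_mul, Matrix.transpose_transpose, Matrix.mul_assoc] at h
    exact h
  have hMsym : Mᵀ = M := sym_of_max_s14 hMmax
  have hMpsdF : ∀ v, 0 ≤ v ⬝ᵥ (M *ᵥ v) := psd_of_max hMmax
  -- kernel facts
  have hC₀S₀ : C₀ * S₀ = 0 := by
    ext i j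
    have hcol : C₀ *ᵥ (fun k => S₀ k j) = 0 := by
      refine (hker _).mpr ⟨Pi.single j 1, ?_⟩
      funext k
      simp [Matrix.mulVec, dotProduct, Pi.single_apply]
    have h : (C₀ * S₀) i j = (C₀ *ᵥ (fun k => S₀ k j)) i := by
      simp [Matrix.mul_apply, Matrix.mulVec, dotProduct]
    rw [h, hcol]
    rfl
  have hS₀C₀ : S₀ᵀ * C₀ = 0 := by
    have h := congrArg Matrix.transpose hC₀S₀
    rwa [Matrix.transpose_mul, hC₀sym, Matrix.transpose_zero] at h
  set T : Matrix (Fin (m * d)) (Fin d) ℝ := S₀ * Q with hT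
  have hTT : Tᵀ * T = (m:ℝ) • 1 := by
    rw [hT, Matrix.transpose_mul, Matrix.mul_assoc, ← Matrix.mul_assoc S₀ᵀ S₀ Q, hS₀,
      Matrix.smul_mul, Matrix.one_mul, Matrix.mul_smul, hQ]
  -- gram bounds
  obtain ⟨hg0le, hg0psd⟩ := gram_quad hmR.le hS₀
  obtain ⟨hgsle, hgspsd⟩ := gram_quad hmR.le hSstar
  obtain ⟨hgTle, hgTpsd⟩ := gram_quad hmR.le hTT
  -- M * M = A'ᵀ * A'
  have hMM : M * M = A'ᵀ * A' := by
    calc M * M = Mᵀ * M := by rw [hMsym]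
      _ = (Qᵀ * A')ᵀ * (Qᵀ * A') := by rw [hM]
      _ = A'ᵀ * (Q * (Qᵀ * A')) := by
          rw [Matrix.transpose_mul, Matrix.transpose_transpose, Matrix.mul_assoc]
      _ = A'ᵀ * A' := by rw [← Matrix.mul_assoc Q Qᵀ A', hQQT, Matrix.one_mul]
  have hM2quad : ∀ x, x ⬝ᵥ ((M * M) *ᵥ x) ≤ ((m:ℝ))^2 * (x ⬝ᵥ x) := by
    intro x
    rw [hMM, dot_gram']
    have h1 : A' *ᵥ x = S₀ᵀ *ᵥ (Sstar *ᵥ x) := by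
      rw [hA', ← Matrix.mulVec_mulVec]
    rw [h1]
    have h2 : (S₀ᵀ *ᵥ (Sstar *ᵥ x)) ⬝ᵥ (S₀ᵀ *ᵥ (Sstar *ᵥ x))
        = (Sstar *ᵥ x) ⬝ᵥ ((S₀ * S₀ᵀ) *ᵥ (Sstar *ᵥ x)) := by
      have h := dot_gram' S₀ᵀ (Sstar *ᵥ x)
      rw [Matrix.transpose_transpose] at h
      exact h.symm
    rw [h2]
    have h3 := hg0le (Sstar *ᵥ x)
    have h4 : (Sstar *ᵥ x) ⬝ᵥ (Sstar *ᵥ x) = (m:ℝ) * (x ⬝ᵥ x) := by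
      have h := dot_gram' Sstar x
      rw [hSstar] at h
      rw [← h, Matrix.smul_mulVec, Matrix.one_mulVec, dotProduct_smul, smul_eq_mul]
    rw [h4] at h3
    nlinarith [h3]
  have hMle : ∀ x, x ⬝ᵥ (M *ᵥ x) ≤ (m:ℝ) * (x ⬝ᵥ x) :=
    quad_le_of_sq hMsym hMpsdF hM2quad hmR.le
  -- trace inequality Tr(M²) ≤ m Tr(M)
  have hMpsdMat : M.PosSemidef := posSemidef_of hMsym hMpsdF
  have hmIM : ((m:ℝ) • 1 - M).PosSemidef := by
    refine posSemidef_of ?_ ?_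
    · rw [Matrix.transpose_sub, Matrix.transpose_smul, Matrix.transpose_one, hMsym]
    · intro x
      have h : ((m:ℝ) • 1 - M) *ᵥ x = (m:ℝ) • x - M *ᵥ x := by
        rw [Matrix.sub_mulVec, Matrix.smul_mulVec, Matrix.one_mulVec]
      rw [h, dotProduct_sub, dotProduct_smul, smul_eq_mul]
      linarith [hMle x]
  have htrM2 : (M * M).trace ≤ (m:ℝ) * M.trace := by
    have h0 := trace_psd_mul_nonneg hMpsdMat hmIM
    have h : M * ((m:ℝ) • 1 - M) = (m:ℝ) • M - M * M := by
      rw [Matrix.mul_sub, Matrix.mul_smul, Matrix.mul_one]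
    rw [h, Matrix.trace_sub, Matrix.trace_smul, smul_eq_mul] at h0
    linarith
  -- trace values
  have htrS : (Sstarᵀ * Sstar).trace = (m:ℝ) * d := by
    rw [hSstar, Matrix.trace_smul, Matrix.trace_one, smul_eq_mul]
    simp
  have htrT : (Tᵀ * T).trace = (m:ℝ) * d := by
    rw [hTT, Matrix.trace_smul, Matrix.trace_one, smul_eq_mul]
    simp
  have htrTS : (Tᵀ * Sstar).trace = M.trace := by
    rw [hT, Matrix.transpose_mul, Matrix.mul_assoc]
  have htrST : (Sstarᵀ * T).trace = M.trace := by
    rw [← Matrix.trace_transpose, Matrix.transpose_mul, Matrix.transpose_transpose]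
    exact htrTS
  set E : Matrix (Fin (m * d)) (Fin d) ℝ := Sstar - T with hE
  set δ : ℝ := frobNorm E with hδ
  have hδnn : 0 ≤ δ := frob_nonneg E
  have hδsq : δ ^ 2 = 2 * ((m:ℝ) * d) - 2 * M.trace := by
    rw [hδ, frob_sq, hE, Matrix.transpose_sub, Matrix.sub_mul, Matrix.mul_sub, Matrix.mul_sub,
      Matrix.trace_sub, Matrix.trace_sub, Matrix.trace_sub, htrS, htrT, htrTS, htrST]
    ring
  -- quadratic growth via projection
  set Pm : Matrix (Fin (m * d)) (Fin d) ℝ := Sstar - (m:ℝ)⁻¹ • (S₀ * A') with hPm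
  have hS₀TP : S₀ᵀ * Pm = 0 := by
    rw [hPm, Matrix.mul_sub, Matrix.mul_smul, ← Matrix.mul_assoc, hS₀, Matrix.smul_mul,
      Matrix.one_mul, smul_smul, inv_mul_cancel₀ (ne_of_gt hmR), one_smul, ← hA', sub_self]
  have hC₀Sstar : C₀ * Sstar = C₀ * Pm := by
    rw [hPm, Matrix.mul_sub, Matrix.mul_smul, ← Matrix.mul_assoc, hC₀S₀, Matrix.zero_mul,
      smul_zero, sub_zero]
  set TrC₀ : ℝ := (C₀ * Sstar * Sstarᵀ).trace with hTrC₀def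
  have hSdecomp : Sstar = Pm + (m:ℝ)⁻¹ • (S₀ * A') := by
    rw [hPm, sub_add_cancel]
  have hTrC₀P : TrC₀ = (Pmᵀ * (C₀ * Pm)).trace := by
    rw [hTrC₀def, Matrix.trace_mul_comm (C₀ * Sstar) Sstarᵀ, hC₀Sstar]
    conv_lhs => rw [hSdecomp]
    rw [Matrix.transpose_add, Matrix.transpose_smul, Matrix.transpose_mul, Matrix.add_mul,
      Matrix.smul_mul, Matrix.mul_assoc A'ᵀ S₀ᵀ (C₀ * Pm), ← Matrix.mul_assoc S₀ᵀ C₀ Pm,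
      hS₀C₀, Matrix.zero_mul, Matrix.mul_zero, smul_zero, add_zero]
  have hgrowth : lam * ((Pmᵀ * Pm).trace) ≤ (Pmᵀ * (C₀ * Pm)).trace := by
    have hcol : ∀ jj : Fin d,
        lam * ((fun i => Pm i jj) ⬝ᵥ (fun i => Pm i jj))
          ≤ (fun i => Pm i jj) ⬝ᵥ (C₀ *ᵥ (fun i => Pm i jj)) := by
      intro jj
      apply hlam
      intro y hy
      obtain ⟨w, rfl⟩ := (hker y).mp hy
      rw [Matrix.dotProduct_mulVec]
      have h : (fun i => Pm i jj) ᵥ* S₀ = 0 := by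
        funext k
        have h := congrFun (congrFun hS₀TP k) jj
        simpa [Matrix.vecMul, Matrix.mul_apply, dotProduct, mul_comm] using h
      rw [h, zero_dotProduct]
    have ht1 : (Pmᵀ * Pm).trace = ∑ jj, (fun i => Pm i jj) ⬝ᵥ (fun i => Pm i jj) := by
      simp [Matrix.trace, Matrix.diag, Matrix.mul_apply, dotProduct]
    have ht2 : (Pmᵀ * (C₀ * Pm)).trace
        = ∑ jj, (fun i => Pm i jj) ⬝ᵥ (C₀ *ᵥ (fun i => Pm i jj)) := by
      simp [Matrix.trace, Matrix.diag, Matrix.mul_apply, dotProduct, Matrix.mulVec]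
    rw [ht1, ht2, Finset.mul_sum]
    exact Finset.sum_le_sum fun jj _ => hcol jj
  have hPmtrace : (Pmᵀ * Pm).trace = (m:ℝ) * d - (m:ℝ)⁻¹ * (M * M).trace := by
    have hexp : Pmᵀ * Pm
        = (m:ℝ) • (1 : Matrix (Fin d) (Fin d) ℝ) - (m:ℝ)⁻¹ • (A'ᵀ * A') := by
      have hStS₀ : Sstarᵀ * (S₀ * A') = A'ᵀ * A' := by
        rw [← Matrix.mul_assoc]
        congr 1
        rw [hA', Matrix.transpose_mul, Matrix.transpose_transpose]
      have hA'tS : (S₀ * A')ᵀ * Sstar = A'ᵀ * A' := by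
        rw [Matrix.transpose_mul, Matrix.mul_assoc, ← hA']
      have hmid : (S₀ * A')ᵀ * (S₀ * A') = (m:ℝ) • (A'ᵀ * A') := by
        rw [Matrix.transpose_mul, Matrix.mul_assoc, ← Matrix.mul_assoc S₀ᵀ S₀ A', hS₀,
          Matrix.smul_mul, Matrix.one_mul, Matrix.mul_smul]
      rw [hPm]
      simp only [Matrix.transpose_sub, Matrix.transpose_smul, Matrix.sub_mul, Matrix.mul_sub,
        Matrix.smul_mul, Matrix.mul_smul, hSstar, hStS₀, hA'tS, hmid, smul_smul]
      match_scalars <;> field_simp <;> ring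
    rw [hexp, Matrix.trace_sub, Matrix.trace_smul, Matrix.trace_smul, Matrix.trace_one,
      smul_eq_mul, smul_eq_mul, ← hMM]
    simp
  have hkey1 : lam * ((m:ℝ) * d - M.trace) ≤ TrC₀ := by
    have h1 : (m:ℝ) * d - M.trace ≤ (Pmᵀ * Pm).trace := by
      rw [hPmtrace]
      have h2 : (m:ℝ)⁻¹ * ((m:ℝ) * M.trace) = M.trace := by
        field_simp
      have h3 := mul_le_mul_of_nonneg_left htrM2 (inv_nonneg.mpr hmR.le)
      linarith
    calc lam * ((m:ℝ) * d - M.trace) ≤ lam * (Pmᵀ * Pm).trace :=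
          mul_le_mul_of_nonneg_left h1 hlam_pos.le
      _ ≤ (Pmᵀ * (C₀ * Pm)).trace := hgrowth
      _ = TrC₀ := hTrC₀P.symm
  -- perturbation bound
  set D : Matrix (Fin (m * d)) (Fin (m * d)) ℝ := C₀ - C with hD
  have hfrobD : frobNorm D = frobNorm (C - C₀) := by
    rw [hD, show C₀ - C = -(C - C₀) from (neg_sub C C₀).symm, frob_neg]
  have hfDnn : 0 ≤ frobNorm D := frob_nonneg D
  have hC₀T : (C₀ * T * Tᵀ).trace = 0 := by
    rw [hT, ← Matrix.mul_assoc C₀ S₀ Q, hC₀S₀, Matrix.zero_mul, Matrix.zero_mul,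
      Matrix.trace_zero]
  have hsplit : TrC₀ ≤ (D * Sstar * Sstarᵀ).trace - (D * T * Tᵀ).trace := by
    have hopt' := hopt Q hQ
    rw [← hT] at hopt'
    have e1 : TrC₀ = (D * Sstar * Sstarᵀ).trace + (C * Sstar * Sstarᵀ).trace := by
      rw [hTrC₀def, hD, Matrix.sub_mul, Matrix.sub_mul, Matrix.trace_sub]
      ring
    have e2 : (C * T * Tᵀ).trace = -(D * T * Tᵀ).trace + (C₀ * T * Tᵀ).trace := by
      rw [hD, Matrix.sub_mul, Matrix.sub_mul, Matrix.trace_sub]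
      ring
    calc TrC₀ = (D * Sstar * Sstarᵀ).trace + (C * Sstar * Sstarᵀ).trace := e1
      _ ≤ (D * Sstar * Sstarᵀ).trace + (C * T * Tᵀ).trace := by linarith [hopt']
      _ = (D * Sstar * Sstarᵀ).trace - (D * T * Tᵀ).trace := by
          rw [e2, hC₀T]; ring
  have hsplit2 : (D * Sstar * Sstarᵀ).trace - (D * T * Tᵀ).trace
      = (D * Sstar * Eᵀ).trace + (D * E * Tᵀ).trace := by
    have hgen0 : ∀ (DD : Matrix (Fin (m * d)) (Fin (m * d)) ℝ)
        (X Y : Matrix (Fin (m * d)) (Fin d) ℝ),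
        DD * X * Xᵀ - DD * Y * Yᵀ = DD * X * (X - Y)ᵀ + DD * (X - Y) * Yᵀ := by
      intro DD X Y
      rw [Matrix.transpose_sub, Matrix.mul_sub, Matrix.mul_sub, Matrix.sub_mul,
        sub_add_sub_cancel]
    have hgen := hgen0 D Sstar T
    rw [← hE] at hgen
    rw [← Matrix.trace_sub, ← Matrix.trace_add, hgen]
  have hDS : frobNorm (D * Sstar) ≤ Real.sqrt m * frobNorm D := by
    have hpsdD : (Dᵀ * D).PosSemidef := by
      have h := Matrix.posSemidef_conjTranspose_mul_self D
      rwa [Matrix.conjTranspose_eq_transpose_of_trivial] at h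
    have heq : ((D * Sstar)ᵀ * (D * Sstar)).trace
        = ((Dᵀ * D) * (Sstar * Sstarᵀ)).trace := by
      rw [Matrix.trace_mul_comm ((D * Sstar)ᵀ) (D * Sstar)]
      have h : (D * Sstar) * (D * Sstar)ᵀ = D * (Sstar * Sstarᵀ) * Dᵀ := by
        rw [Matrix.transpose_mul]
        simp only [Matrix.mul_assoc]
      rw [h, Matrix.trace_mul_cycle D (Sstar * Sstarᵀ) Dᵀ, ← Matrix.mul_assoc]
    have hbound : ((Dᵀ * D) * (Sstar * Sstarᵀ)).trace ≤ (m:ℝ) * (Dᵀ * D).trace := by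
      have h0 := trace_psd_mul_nonneg hpsdD hgspsd
      have h : (Dᵀ * D) * ((m:ℝ) • 1 - Sstar * Sstarᵀ)
          = (m:ℝ) • (Dᵀ * D) - (Dᵀ * D) * (Sstar * Sstarᵀ) := by
        rw [Matrix.mul_sub, Matrix.mul_smul, Matrix.mul_one]
      rw [h, Matrix.trace_sub, Matrix.trace_smul, smul_eq_mul] at h0
      linarith
    have h2 : ((D * Sstar)ᵀ * (D * Sstar)).trace ≤ (m:ℝ) * (frobNorm D)^2 := by
      rw [frob_sq, heq]
      exact hbound
    calc frobNorm (D * Sstar) = Real.sqrt (((D * Sstar)ᵀ * (D * Sstar)).trace) := rfl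
      _ ≤ Real.sqrt ((m:ℝ) * (frobNorm D)^2) := Real.sqrt_le_sqrt h2
      _ = Real.sqrt m * frobNorm D := by
          rw [Real.sqrt_mul hmR.le, Real.sqrt_sq hfDnn]
  have hDT : frobNorm (Dᵀ * T) ≤ Real.sqrt m * frobNorm D := by
    have hpsdD : (D * Dᵀ).PosSemidef := by
      have h := Matrix.posSemidef_self_mul_conjTranspose D
      rwa [Matrix.conjTranspose_eq_transpose_of_trivial] at h
    have heq : ((Dᵀ * T)ᵀ * (Dᵀ * T)).trace = ((D * Dᵀ) * (T * Tᵀ)).trace := by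
      rw [Matrix.trace_mul_comm ((Dᵀ * T)ᵀ) (Dᵀ * T)]
      have h : (Dᵀ * T) * (Dᵀ * T)ᵀ = Dᵀ * (T * Tᵀ) * D := by
        rw [Matrix.transpose_mul, Matrix.transpose_transpose]
        simp only [Matrix.mul_assoc]
      rw [h, Matrix.trace_mul_cycle Dᵀ (T * Tᵀ) D, ← Matrix.mul_assoc]
    have hbound : ((D * Dᵀ) * (T * Tᵀ)).trace ≤ (m:ℝ) * (D * Dᵀ).trace := by
      have h0 := trace_psd_mul_nonneg hpsdD hgTpsd
      have h : (D * Dᵀ) * ((m:ℝ) • 1 - T * Tᵀ)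
          = (m:ℝ) • (D * Dᵀ) - (D * Dᵀ) * (T * Tᵀ) := by
        rw [Matrix.mul_sub, Matrix.mul_smul, Matrix.mul_one]
      rw [h, Matrix.trace_sub, Matrix.trace_smul, smul_eq_mul] at h0
      linarith
    have hDDt : (D * Dᵀ).trace = (frobNorm D)^2 := by
      rw [frob_sq, Matrix.trace_mul_comm]
    have h2 : ((Dᵀ * T)ᵀ * (Dᵀ * T)).trace ≤ (m:ℝ) * (frobNorm D)^2 := by
      rw [heq, ← hDDt]
      exact hbound
    calc frobNorm (Dᵀ * T) = Real.sqrt (((Dᵀ * T)ᵀ * (Dᵀ * T)).trace) := rfl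
      _ ≤ Real.sqrt ((m:ℝ) * (frobNorm D)^2) := Real.sqrt_le_sqrt h2
      _ = Real.sqrt m * frobNorm D := by
          rw [Real.sqrt_mul hmR.le, Real.sqrt_sq hfDnn]
  have hb1 : (D * Sstar * Eᵀ).trace ≤ δ * (Real.sqrt m * frobNorm D) := by
    rw [Matrix.trace_mul_comm (D * Sstar) Eᵀ]
    exact (cs_trace E (D * Sstar)).trans (mul_le_mul_of_nonneg_left hDS hδnn)
  have hb2 : (D * E * Tᵀ).trace ≤ δ * (Real.sqrt m * frobNorm D) := by
    have h : (D * E * Tᵀ).trace = (Eᵀ * (Dᵀ * T)).trace := by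
      rw [Matrix.trace_mul_comm (D * E) Tᵀ, ← Matrix.trace_transpose (Tᵀ * (D * E))]
      congr 1
      rw [Matrix.transpose_mul, Matrix.transpose_mul, Matrix.transpose_transpose]
      simp only [Matrix.mul_assoc]
    rw [h]
    exact (cs_trace E (Dᵀ * T)).trans (mul_le_mul_of_nonneg_left hDT hδnn)
  have hkey2 : TrC₀ ≤ 2 * Real.sqrt m * frobNorm D * δ := by
    calc TrC₀ ≤ (D * Sstar * Sstarᵀ).trace - (D * T * Tᵀ).trace := hsplit
      _ = (D * Sstar * Eᵀ).trace + (D * E * Tᵀ).trace := hsplit2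
      _ ≤ δ * (Real.sqrt m * frobNorm D) + δ * (Real.sqrt m * frobNorm D) :=
          add_le_add hb1 hb2
      _ = 2 * Real.sqrt m * frobNorm D * δ := by ring
  -- conclude
  have hsm : Real.sqrt m ≤ (m:ℝ) := by
    nlinarith [Real.sq_sqrt hmR.le, Real.sqrt_nonneg (m:ℝ), hmR1]
  have hδle : δ ≤ 4 * m * frobNorm (C - C₀) / lam := by
    rw [le_div_iff₀ hlam_pos]
    have hcomb : lam * (δ ^ 2 / 2) ≤ 2 * Real.sqrt m * frobNorm D * δ := by
      have h : δ ^ 2 / 2 = (m:ℝ) * d - M.trace := by rw [hδsq]; ring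
      rw [h]
      exact hkey1.trans hkey2
    rcases eq_or_lt_of_le hδnn with h0 | h0
    · rw [← h0, zero_mul]
      have : 0 ≤ frobNorm (C - C₀) := frob_nonneg _
      positivity
    · have h1 : lam * δ ≤ 4 * Real.sqrt m * frobNorm D := by
        refine le_of_mul_le_mul_right ?_ h0
        nlinarith [hcomb]
      have hsqnn : 0 ≤ Real.sqrt m := Real.sqrt_nonneg _
      calc δ * lam = lam * δ := mul_comm _ _
        _ ≤ 4 * Real.sqrt m * frobNorm D := h1
        _ ≤ 4 * (m:ℝ) * frobNorm (C - C₀) := by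
            rw [← hfrobD]
            nlinarith [mul_le_mul_of_nonneg_right hsm hfDnn]
  have hmem : δ ∈ {x : ℝ | ∃ Q : Matrix (Fin d) (Fin d) ℝ,
      Qᵀ * Q = 1 ∧ x = frobNorm (Sstar - S₀ * Q)} := ⟨Q, hQ, by rw [hδ, hE, hT]⟩
  exact (csInf_le hbdd hmem).trans hδle
end
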